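/- Define g : [1,∞) → [0,1] by g(x) = 1/(n+1) + (1/(n(n+1)))·(x−(n+1))^{n(n+1)} for x ∈ [n, n+1), n ≥ 1 a positive integer. Then g is continuous on [1,∞), inf g = 0, g never attains the value 0, and the local slope s[g](x) = limsup_{y→x} (g(x)−g(y))⁺/|x−y| is strictly positive at every x ∈ [1,∞), while liminf_{x→n} s[g](x) = 0 for every integer n ≥ 2. -/

import Mathlib

open Filter
open scoped ENNReal Topology

/-- The local slope of `g : ℝ → ℝ` relative to the space `X = [1,∞)`:
`s[g](x) = limsup_{y → x, y ∈ [1,∞), y ≠ x} (g(x)−g(y))⁺/|x−y|`. -/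
noncomputable def slopeIci1 (g : ℝ → ℝ) (x : ℝ) : ℝ≥0∞ :=
  limsup (fun y => ENNReal.ofReal (max (g x - g y) 0 / |x - y|))
    (𝓝[Set.Ici 1 \ {x}] x)

private lemma geomsub_le {a b : ℝ} (hb : 0 ≤ b) (hba : b ≤ a) (m : ℕ) :
    a ^ m - b ^ m ≤ m * a ^ (m - 1) * (a - b) := by
  have ha : 0 ≤ a := hb.trans hba
  rw [← geom_sum₂_mul]
  have h1 : ∑ i ∈ Finset.range m, a ^ i * b ^ (m - 1 - i) ≤ m * a ^ (m - 1) := by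
    calc ∑ i ∈ Finset.range m, a ^ i * b ^ (m - 1 - i)
        ≤ ∑ _i ∈ Finset.range m, a ^ (m - 1) := by
          apply Finset.sum_le_sum
          intro i hi
          simp only [Finset.mem_range] at hi
          have hi' : i + (m - 1 - i) = m - 1 := by omega
          calc a ^ i * b ^ (m - 1 - i) ≤ a ^ i * a ^ (m - 1 - i) := by
                exact mul_le_mul_of_nonneg_left (pow_le_pow_left₀ hb hba _) (pow_nonneg ha i)
            _ = a ^ (m - 1) := by rw [← pow_add, hi']
      _ = m * a ^ (m - 1) := by simp [Finset.sum_const, mul_comm]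
  exact mul_le_mul_of_nonneg_right h1 (sub_nonneg.2 hba)

private lemma geomsub_ge {a b : ℝ} (hb : 0 ≤ b) (hba : b ≤ a) (m : ℕ) :
    m * b ^ (m - 1) * (a - b) ≤ a ^ m - b ^ m := by
  rw [← geom_sum₂_mul]
  have h1 : (m : ℝ) * b ^ (m - 1) ≤ ∑ i ∈ Finset.range m, a ^ i * b ^ (m - 1 - i) := by
    calc (m : ℝ) * b ^ (m - 1) = ∑ _i ∈ Finset.range m, b ^ (m - 1) := by
          simp [Finset.sum_const, mul_comm]
      _ ≤ ∑ i ∈ Finset.range m, a ^ i * b ^ (m - 1 - i) := by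
          apply Finset.sum_le_sum
          intro i hi
          simp only [Finset.mem_range] at hi
          have hi' : i + (m - 1 - i) = m - 1 := by omega
          calc b ^ (m - 1) = b ^ i * b ^ (m - 1 - i) := by rw [← pow_add, hi']
            _ ≤ a ^ i * b ^ (m - 1 - i) :=
              mul_le_mul_of_nonneg_right (pow_le_pow_left₀ hb hba _) (pow_nonneg hb _)
  exact mul_le_mul_of_nonneg_right h1 (sub_nonneg.2 hba)

section
open Set
variable {g : ℝ → ℝ}
  (hg : ∀ n : ℕ, 1 ≤ n → ∀ x ∈ Set.Ico (n : ℝ) ((n : ℝ) + 1),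
      g x = 1 / ((n : ℝ) + 1) +
        (x - ((n : ℝ) + 1)) ^ (n * (n + 1)) / ((n : ℝ) * ((n : ℝ) + 1)))

private lemma mem_block {x : ℝ} (hx : 1 ≤ x) :
    ∃ n : ℕ, 1 ≤ n ∧ x ∈ Set.Ico (n : ℝ) ((n : ℝ) + 1) :=
  ⟨⌊x⌋₊, Nat.le_floor (by exact_mod_cast hx),
    Nat.floor_le (by linarith), Nat.lt_floor_add_one x⟩

include hg in
private lemma gval {n : ℕ} (hn : 1 ≤ n) {x : ℝ} (hx : x ∈ Set.Ico (n : ℝ) ((n : ℝ) + 1)) :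
    g x = 1 / ((n : ℝ) + 1) + ((n : ℝ) + 1 - x) ^ (n * (n + 1)) / ((n : ℝ) * ((n : ℝ) + 1)) := by
  rw [hg n hn x hx]
  congr 2
  rw [show (x - ((n:ℝ)+1)) = -(((n:ℝ)+1) - x) by ring,
    (Nat.even_mul_succ_self n).neg_pow]

include hg in
private lemma g_int {n : ℕ} (hn : 1 ≤ n) : g n = 1 / (n : ℝ) := by
  have hn0 : (0:ℝ) < n := by exact_mod_cast hn
  rw [gval hg hn ⟨le_refl _, by linarith⟩]
  rw [show ((n:ℝ) + 1 - n) = 1 by ring, one_pow]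
  field_simp

include hg in
private lemma g_pos {x : ℝ} (hx : 1 ≤ x) : 0 < g x := by
  obtain ⟨n, hn, hxn⟩ := mem_block hx
  have hn0 : (0:ℝ) < n := by exact_mod_cast hn
  rw [gval hg hn hxn]
  have h1 : (0:ℝ) < 1 / ((n:ℝ)+1) := by positivity
  have h2 : (0:ℝ) ≤ ((n:ℝ) + 1 - x) ^ (n * (n+1)) / ((n:ℝ) * ((n:ℝ)+1)) := by
    have : (0:ℝ) ≤ (n:ℝ) + 1 - x := by have := hxn.2; linarith
    positivity
  linarith

include hg in
private lemma slope_pos {x : ℝ} (hx : 1 ≤ x) : 0 < slopeIci1 g x := by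
  obtain ⟨n, hn, hxn⟩ := mem_block hx
  have hn0 : (0:ℝ) < n := by exact_mod_cast hn
  set c : ℝ := (n:ℝ) + 1 with hc
  have hxc : x < c := hxn.2
  set m : ℕ := n * (n + 1) with hm
  have hmcast : ((m : ℕ) : ℝ) = (n:ℝ) * ((n:ℝ) + 1) := by rw [hm]; push_cast; ring
  set δ : ℝ := (c - x) / 2 with hδdef
  have hδ : 0 < δ := by rw [hδdef]; linarith
  set c0 : ℝ := δ ^ (m - 1) with hc0def
  have hc0 : 0 < c0 := pow_pos hδ _
  have hN : (0:ℝ) < (n:ℝ) * ((n:ℝ) + 1) := by positivity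
  have key : ∀ z ∈ Ioo x (x + δ),
      ENNReal.ofReal c0 ≤ ENNReal.ofReal (max (g x - g z) 0 / |x - z|) := by
    intro z hz
    have hz1 : x < z := hz.1
    have hz2 : z < x + δ := hz.2
    have hzc : z < c := by rw [hδdef] at hz2; linarith
    have hzn : z ∈ Ico (n:ℝ) ((n:ℝ) + 1) := ⟨le_trans hxn.1 hz1.le, hzc⟩
    have hbz : (0:ℝ) ≤ c - z := by linarith
    have hdiff : g x - g z = ((c - x) ^ m - (c - z) ^ m) / ((n:ℝ) * ((n:ℝ) + 1)) := by
      rw [gval hg hn hxn, gval hg hn hzn]; ring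
    have hge := geomsub_ge hbz (by linarith : c - z ≤ c - x) m
    have hczδ : δ ≤ c - z := by rw [hδdef] at hz2 ⊢; linarith
    have hpow : c0 ≤ (c - z) ^ (m - 1) := by
      rw [hc0def]; exact pow_le_pow_left₀ hδ.le hczδ _
    have hquot : c0 ≤ (g x - g z) / (z - x) := by
      rw [hdiff, div_div, le_div_iff₀ (by nlinarith : (0:ℝ) < (n:ℝ) * ((n:ℝ) + 1) * (z - x))]
      calc c0 * ((n:ℝ) * ((n:ℝ) + 1) * (z - x))
          ≤ (c - z) ^ (m - 1) * ((n:ℝ) * ((n:ℝ) + 1) * (z - x)) := by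
            apply mul_le_mul_of_nonneg_right hpow; nlinarith
        _ = (m:ℝ) * (c - z) ^ (m - 1) * ((c - x) - (c - z)) := by rw [hmcast]; ring
        _ ≤ (c - x) ^ m - (c - z) ^ m := hge
    apply ENNReal.ofReal_le_ofReal
    calc c0 ≤ (g x - g z) / (z - x) := hquot
      _ ≤ max (g x - g z) 0 / (z - x) := div_le_div_of_nonneg_right (le_max_left _ _) (by linarith)
      _ = max (g x - g z) 0 / |x - z| := by
          rw [abs_sub_comm, abs_of_pos (by linarith : (0:ℝ) < z - x)]
  have hF : 𝓝[Ioi x] x ≤ 𝓝[Ici 1 \ {x}] x := by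
    apply nhdsWithin_mono
    intro z hz
    exact ⟨hx.trans (le_of_lt hz), by simp [ne_of_gt (mem_Ioi.mp hz)]⟩
  have hIoo : Ioo x (x + δ) ∈ 𝓝[Ioi x] x :=
    Ioo_mem_nhdsGT_of_mem ⟨le_refl x, by linarith⟩
  have hev : ∀ᶠ z in 𝓝[Ioi x] x,
      ENNReal.ofReal c0 ≤ ENNReal.ofReal (max (g x - g z) 0 / |x - z|) :=
    mem_of_superset hIoo key
  calc (0:ℝ≥0∞) < ENNReal.ofReal c0 := ENNReal.ofReal_pos.2 hc0
    _ ≤ limsup (fun z => ENNReal.ofReal (max (g x - g z) 0 / |x - z|)) (𝓝[Ioi x] x) :=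
        le_limsup_of_frequently_le hev.frequently
    _ ≤ slopeIci1 g x := limsup_le_limsup_of_le hF

include hg in
private lemma slope_le {n : ℕ} (hn : 2 ≤ n) {y : ℝ} (hy : y ∈ Ioo ((n:ℝ) - 1) (n:ℝ)) :
    slopeIci1 g y ≤ ENNReal.ofReal (((n:ℝ) - y) ^ ((n - 1) * n - 1)) := by
  obtain ⟨k, rfl⟩ : ∃ k, n = k + 1 := ⟨n - 1, by omega⟩
  have hk : 1 ≤ k := by omega
  have hk0 : (0:ℝ) < k := by exact_mod_cast hk
  have hcast : ((k:ℝ) + 1) = ((k + 1 : ℕ) : ℝ) := by push_cast; ring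
  have hcast1 : ((k + 1 : ℕ) : ℝ) - 1 = (k:ℝ) := by push_cast; ring
  set nn : ℝ := ((k + 1 : ℕ) : ℝ) with hnn
  set M : ℕ := k * (k + 1) with hM
  have hMeq : (k + 1 - 1) * (k + 1) = M := by rw [hM]; simp
  have hMcast : ((M : ℕ) : ℝ) = (k:ℝ) * ((k:ℝ) + 1) := by rw [hM]; push_cast; ring
  have hM2 : 2 ≤ M := by rw [hM]; nlinarith
  have hy1 : (k:ℝ) < y := by rw [← hcast1]; exact hy.1
  have hy2 : y < nn := hy.2
  set B : ℝ := (nn - y) ^ (M - 1) with hB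
  have hBnn : 0 ≤ B := by rw [hB]; exact pow_nonneg (by linarith [hy.2]) _
  have key : ∀ z ∈ Ioo ((k:ℝ)) nn,
      ENNReal.ofReal (max (g y - g z) 0 / |y - z|) ≤ ENNReal.ofReal B := by
    intro z hz
    have hzk : z ∈ Ico (k:ℝ) ((k:ℝ) + 1) := ⟨hz.1.le, by rw [hcast]; exact hz.2⟩
    have hyk : y ∈ Ico (k:ℝ) ((k:ℝ) + 1) := ⟨hy1.le, by rw [hcast]; exact hy2⟩
    have hgz := gval hg hk hzk
    have hgy := gval hg hk hyk
    have hdiff : g y - g z = ((nn - y) ^ M - (nn - z) ^ M) / ((k:ℝ) * ((k:ℝ) + 1)) := by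
      rw [hgy, hgz, hcast]; ring
    rcases le_or_gt z y with hzy | hzy
    · -- g y ≤ g z, numerator max is 0
      have : (nn - y) ^ M ≤ (nn - z) ^ M :=
        pow_le_pow_left₀ (by linarith [hy2] : (0:ℝ) ≤ nn - y) (by linarith) _
      have hle : g y - g z ≤ 0 := by
        rw [hdiff]
        apply div_nonpos_of_nonpos_of_nonneg (by linarith) (by positivity)
      rw [max_eq_right hle, zero_div]
      simp
    · -- y < z
      have hbz : (0:ℝ) ≤ nn - z := by linarith [hz.2]
      have hle := geomsub_le hbz (by linarith : nn - z ≤ nn - y) M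
      have hnum : g y - g z ≤ B * (z - y) := by
        rw [hdiff, div_le_iff₀ (by positivity : (0:ℝ) < (k:ℝ) * ((k:ℝ) + 1))]
        calc (nn - y) ^ M - (nn - z) ^ M
            ≤ (M:ℝ) * (nn - y) ^ (M - 1) * ((nn - y) - (nn - z)) := hle
          _ = B * (z - y) * ((k:ℝ) * ((k:ℝ) + 1)) := by rw [hMcast, hB]; ring
      apply ENNReal.ofReal_le_ofReal
      rw [abs_sub_comm, abs_of_pos (by linarith : (0:ℝ) < z - y),
        div_le_iff₀ (by linarith : (0:ℝ) < z - y)]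
      exact max_le hnum (mul_nonneg hBnn (by linarith))
  have hIoo : Ioo ((k:ℝ)) nn ∈ 𝓝[Ici 1 \ {y}] y := by
    apply mem_nhdsWithin_of_mem_nhds
    exact isOpen_Ioo.mem_nhds ⟨hy1, hy2⟩
  rw [hMeq]
  exact limsup_le_of_le (by isBoundedDefault) (mem_of_superset hIoo key)

include hg in
private lemma liminf_slope {n : ℕ} (hn : 2 ≤ n) :
    liminf (fun y => slopeIci1 g y) (𝓝[Set.Ici 1 \ {(n : ℝ)}] (n : ℝ)) = 0 := by
  have hn1 : (1:ℝ) ≤ (n:ℝ) - 1 := by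
    have : (2:ℝ) ≤ (n:ℝ) := by exact_mod_cast hn
    linarith
  have hlt : ((n:ℝ) - 1) < (n:ℝ) := by linarith
  set F : Filter ℝ := 𝓝[Ioo ((n:ℝ) - 1) (n:ℝ)] (n:ℝ) with hF
  have hFeq : F = 𝓝[Iio (n:ℝ)] (n:ℝ) := nhdsWithin_Ioo_eq_nhdsLT hlt
  have hFne : F.NeBot := by rw [hFeq]; infer_instance
  have hFle : F ≤ 𝓝[Set.Ici 1 \ {(n:ℝ)}] (n:ℝ) := by
    apply nhdsWithin_mono
    rintro z ⟨hz1, hz2⟩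
    refine ⟨mem_Ici.mpr (by linarith), fun h => absurd (mem_singleton_iff.mp h) (ne_of_lt hz2)⟩
  have h1 : liminf (fun y => slopeIci1 g y) (𝓝[Set.Ici 1 \ {(n : ℝ)}] (n : ℝ)) ≤
      liminf (fun y => slopeIci1 g y) F := liminf_le_liminf_of_le hFle
  have h2 : liminf (fun y => slopeIci1 g y) F ≤
      liminf (fun y => ENNReal.ofReal (((n:ℝ) - y) ^ ((n - 1) * n - 1))) F := by
    refine liminf_le_liminf ?_ (by isBoundedDefault) (by isBoundedDefault)
    filter_upwards [self_mem_nhdsWithin] with y hy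
    exact slope_le hg hn hy
  have h3 : Tendsto (fun y => ENNReal.ofReal (((n:ℝ) - y) ^ ((n - 1) * n - 1))) F (𝓝 0) := by
    have hM1 : (n - 1) * n - 1 ≠ 0 := by
      have h := Nat.mul_le_mul (by omega : 1 ≤ n - 1) (by omega : 2 ≤ n)
      omega
    have hc : Tendsto (fun y : ℝ => ((n:ℝ) - y) ^ ((n - 1) * n - 1)) (𝓝 (n:ℝ)) (𝓝 0) := by
      have hcont : Continuous (fun y : ℝ => ((n:ℝ) - y) ^ ((n - 1) * n - 1)) := by
        exact (continuous_const.sub continuous_id).pow _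
      have h' := hcont.tendsto (n:ℝ)
      simpa [zero_pow hM1] using h'
    have := ENNReal.tendsto_ofReal hc
    simp only [ENNReal.ofReal_zero] at this
    exact this.mono_left nhdsWithin_le_nhds
  have h4 : liminf (fun y => ENNReal.ofReal (((n:ℝ) - y) ^ ((n - 1) * n - 1))) F = 0 :=
    h3.liminf_eq
  have : liminf (fun y => slopeIci1 g y) (𝓝[Set.Ici 1 \ {(n : ℝ)}] (n : ℝ)) ≤ 0 := by
    calc _ ≤ _ := h1
      _ ≤ _ := h2
      _ = 0 := h4
  exact le_antisymm this zero_le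

include hg in
private lemma g_cont : ContinuousOn g (Set.Ici (1 : ℝ)) := by
  have hPc : ∀ k : ℕ, Continuous (fun z : ℝ =>
      1 / ((k:ℝ) + 1) + ((k:ℝ) + 1 - z) ^ (k * (k + 1)) / ((k:ℝ) * ((k:ℝ) + 1))) :=
    fun k => continuous_const.add (((continuous_const.sub continuous_id).pow _).div_const _)
  intro x hx
  have hx1 : (1:ℝ) ≤ x := hx
  obtain ⟨n, hn, hxn⟩ := mem_block hx1
  rcases eq_or_lt_of_le hxn.1 with heq | hlt
  · -- x = n, an integer point
    have hright : ContinuousWithinAt g (Ici (n:ℝ)) x := by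
      have hmem : Ico (n:ℝ) ((n:ℝ) + 1) ∈ 𝓝[Ici (n:ℝ)] x := by
        rw [← Ici_inter_Iio]
        exact inter_mem self_mem_nhdsWithin
          (mem_nhdsWithin_of_mem_nhds (Iio_mem_nhds hxn.2))
      refine ((hPc n).continuousAt).continuousWithinAt.congr_of_eventuallyEq
        (eventually_of_mem hmem fun z hz => gval hg hn hz) (gval hg hn hxn)
    rcases eq_or_lt_of_le hn with h1 | h2
    · -- n = 1
      have : Set.Ici (1:ℝ) ⊆ Ici (n:ℝ) := by
        apply Ici_subset_Ici.mpr
        rw [← h1]; norm_num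
      exact hright.mono this
    · -- n ≥ 2
      obtain ⟨k, rfl⟩ : ∃ k, n = k + 1 := ⟨n - 1, by omega⟩
      have hk : 1 ≤ k := by omega
      have hk0 : (0:ℝ) < k := by exact_mod_cast hk
      have hck : ((k:ℝ) + 1) = (((k+1:ℕ)):ℝ) := by push_cast; ring
      have hleft : ContinuousWithinAt g (Iio (((k+1:ℕ)):ℝ)) x := by
        have hmem : Ioo ((k:ℝ)) (((k+1:ℕ)):ℝ) ∈ 𝓝[Iio (((k+1:ℕ)):ℝ)] x := by
          rw [← Ioi_inter_Iio]
          refine inter_mem (mem_nhdsWithin_of_mem_nhds (Ioi_mem_nhds ?_)) self_mem_nhdsWithin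
          rw [← heq, ← hck]; linarith
        have hev : ∀ z ∈ Ioo ((k:ℝ)) (((k+1:ℕ)):ℝ), g z =
            1 / ((k:ℝ) + 1) + ((k:ℝ) + 1 - z) ^ (k * (k + 1)) / ((k:ℝ) * ((k:ℝ) + 1)) := by
          intro z hz
          exact gval hg hk ⟨hz.1.le, by rw [hck]; exact hz.2⟩
        have hval : g x = 1 / ((k:ℝ) + 1) +
            ((k:ℝ) + 1 - x) ^ (k * (k + 1)) / ((k:ℝ) * ((k:ℝ) + 1)) := by
          rw [← heq, g_int hg (by omega : 1 ≤ k + 1)]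
          rw [← hck, show (k:ℝ) + 1 - ((k:ℝ) + 1) = 0 by ring]
          rw [zero_pow (by positivity : k * (k+1) ≠ 0)]
          simp
        exact ((hPc k).continuousAt).continuousWithinAt.congr_of_eventuallyEq
          (eventually_of_mem hmem hev) hval
      have hsub : Set.Ici (1:ℝ) ⊆ Iio (((k+1:ℕ)):ℝ) ∪ Ici (((k+1:ℕ)):ℝ) :=
        fun z _ => (lt_or_ge z _).elim Or.inl Or.inr
      exact (hleft.union hright).mono hsub
  · -- n < x : interior point of the block
    have hopen : Ioo ((n:ℝ)) ((n:ℝ) + 1) ∈ 𝓝 x := isOpen_Ioo.mem_nhds ⟨hlt, hxn.2⟩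
    have hca : ContinuousAt g x := by
      refine ((hPc n).continuousAt).congr ?_
      filter_upwards [hopen] with z hz
      exact (gval hg hn ⟨hz.1.le, hz.2⟩).symm
    exact hca.continuousWithinAt

include hg in
private lemma g_glb : IsGLB (g '' Set.Ici (1 : ℝ)) 0 := by
  constructor
  · rintro v ⟨x, hx, rfl⟩
    exact (g_pos hg hx).le
  · intro b hb
    by_contra hb0
    push_neg at hb0
    obtain ⟨n, hn⟩ := exists_nat_one_div_lt hb0
    have hmem : (((n+1:ℕ)):ℝ) ∈ Set.Ici (1:ℝ) := by
      simp only [mem_Ici]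
      exact_mod_cast Nat.one_le_iff_ne_zero.mpr (by omega)
    have hble : b ≤ g (((n+1:ℕ)):ℝ) := hb ⟨_, hmem, rfl⟩
    rw [g_int hg (by omega : 1 ≤ n + 1)] at hble
    have hcast : (((n+1:ℕ)):ℝ) = (n:ℝ) + 1 := by push_cast; ring
    rw [hcast] at hble
    linarith

end

/-- The block-defined function
`g(x) = 1/(n+1) + (x−(n+1))^{n(n+1)}/(n(n+1))` on `[n, n+1)` is continuous on `[1,∞)`,
has infimum `0` which is never attained, has strictly positive local slope everywhere,
while the slope has liminf `0` at each integer `n ≥ 2`. -/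
theorem stmt18 (g : ℝ → ℝ)
    (hg : ∀ n : ℕ, 1 ≤ n → ∀ x ∈ Set.Ico (n : ℝ) ((n : ℝ) + 1),
      g x = 1 / ((n : ℝ) + 1) +
        (x - ((n : ℝ) + 1)) ^ (n * (n + 1)) / ((n : ℝ) * ((n : ℝ) + 1))) :
    ContinuousOn g (Set.Ici (1 : ℝ)) ∧
    IsGLB (g '' Set.Ici (1 : ℝ)) 0 ∧
    (∀ x ∈ Set.Ici (1 : ℝ), g x ≠ 0) ∧
    (∀ x ∈ Set.Ici (1 : ℝ), 0 < slopeIci1 g x) ∧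
    (∀ n : ℕ, 2 ≤ n →
      liminf (fun y => slopeIci1 g y) (𝓝[Set.Ici 1 \ {(n : ℝ)}] (n : ℝ)) = 0) := by
  exact ⟨g_cont hg, g_glb hg, fun x hx => (g_pos hg hx).ne',
    fun x hx => slope_pos hg hx, fun n hn => liminf_slope hg hn⟩
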